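/- Let V be a finite type with n = Fintype.card V ≥ 2, and let H be a simple graph on V whose number of edges is at most n − 2. Then Σ(H) = 0, i.e., the sum over all compatible partitions P of V of (−1)^{|P|−1}·(|P|−1)! equals 0. -/

import Mathlib

open scoped Classical

/-- `P` is a partition of the (finite) vertex type `V` into nonempty blocks which is
compatible with the graph `H`: no block contains two adjacent vertices. -/
def CompatiblePartition {V : Type} [Fintype V] (H : SimpleGraph V)
    (P : Finset (Finset V)) : Prop :=
  (∀ E ∈ P, E.Nonempty) ∧ (∀ v : V, ∃! E, E ∈ P ∧ v ∈ E) ∧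
    ∀ E ∈ P, ∀ u ∈ E, ∀ v ∈ E, ¬ H.Adj u v

/-- `Σ(H) = ∑_{P compatible} (−1)^{|P|−1} (|P|−1)!`. -/
noncomputable def SigmaH {V : Type} [Fintype V] (H : SimpleGraph V) : ℤ :=
  ∑ P : Finset (Finset V),
    if CompatiblePartition H P then
      (-1 : ℤ) ^ (P.card - 1) * (Nat.factorial (P.card - 1) : ℤ)
    else 0

set_option linter.unusedSectionVars false
set_option maxHeartbeats 1000000

/- ### Auxiliary machinery -/

section FibAux
variable {V : Type} [Fintype V] [DecidableEq V]

/-- The fiber partition of a coloring. -/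
noncomputable def fibPart {k : ℕ} (f : V → ZMod k) : Finset (Finset V) :=
  (Finset.univ.image f).image (fun c => Finset.univ.filter (fun v => f v = c))

lemma fibPart_block_eq {k : ℕ} {f : V → ZMod k} {E : Finset V} (hE : E ∈ fibPart f) {x : V}
    (hx : x ∈ E) : E = Finset.univ.filter (fun v => f v = f x) := by
  obtain ⟨c, -, rfl⟩ := Finset.mem_image.mp hE
  have := (Finset.mem_filter.mp hx).2
  simp [this]

lemma mem_fibPart_self {k : ℕ} (f : V → ZMod k) (v : V) :
    Finset.univ.filter (fun w => f w = f v) ∈ fibPart f :=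
  Finset.mem_image.mpr ⟨f v, by simp, rfl⟩

lemma fibPart_isPartition {k : ℕ} (f : V → ZMod k) :
    (∀ E ∈ fibPart f, E.Nonempty) ∧ (∀ v : V, ∃! E, E ∈ fibPart f ∧ v ∈ E) := by
  constructor
  · intro E hE
    obtain ⟨c, hc, rfl⟩ := Finset.mem_image.mp hE
    obtain ⟨v, -, hv⟩ := Finset.mem_image.mp hc
    exact ⟨v, by simp [hv]⟩
  · intro v
    refine ⟨Finset.univ.filter (fun w => f w = f v), ⟨mem_fibPart_self f v, by simp⟩, ?_⟩
    rintro E ⟨hE, hvE⟩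
    exact fibPart_block_eq hE hvE

lemma fibPart_compatible_iff (H : SimpleGraph V) {k : ℕ} (f : V → ZMod k) :
    CompatiblePartition H (fibPart f) ↔ ∀ u v : V, H.Adj u v → f u ≠ f v := by
  constructor
  · rintro ⟨-, -, h3⟩ u v huv hfe
    exact h3 _ (mem_fibPart_self f v) u (by simp [hfe]) v (by simp) huv
  · intro hf
    refine ⟨(fibPart_isPartition f).1, (fibPart_isPartition f).2, ?_⟩
    intro E hE u hu v hv huv
    have h1 := fibPart_block_eq hE hu
    have h2 : f v = f u := by
      have := h1 ▸ hv
      simpa using this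
    exact hf u v huv h2.symm

variable {P : Finset (Finset V)}
variable (hP1 : ∀ E ∈ P, E.Nonempty) (hP2 : ∀ v : V, ∃! E, E ∈ P ∧ v ∈ E)

/-- The block of `v` in the partition `P`. -/
noncomputable def blk (hP2 : ∀ v : V, ∃! E, E ∈ P ∧ v ∈ E) (v : V) : Finset V :=
  (hP2 v).exists.choose

lemma blk_mem (v : V) : blk hP2 v ∈ P := (hP2 v).exists.choose_spec.1
lemma mem_blk (v : V) : v ∈ blk hP2 v := (hP2 v).exists.choose_spec.2
lemma blk_eq_of_mem {E : Finset V} (hE : E ∈ P) {v : V} (hv : v ∈ E) : blk hP2 v = E :=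
  ((hP2 v).unique ⟨blk_mem hP2 v, mem_blk hP2 v⟩ ⟨hE, hv⟩)

/-- A representative of each block. -/
noncomputable def rep (hP1 : ∀ E ∈ P, E.Nonempty) (E : {E // E ∈ P}) : V :=
  (hP1 E.1 E.2).choose

lemma rep_mem (E : {E // E ∈ P}) : rep hP1 E ∈ E.1 := (hP1 E.1 E.2).choose_spec

variable {k : ℕ}
include hP1 hP2

omit hP1 hP2 in
lemma const_on_blocks {f : V → ZMod k} (hf : fibPart f = P) {E : Finset V} (hE : E ∈ P)
    {x y : V} (hx : x ∈ E) (hy : y ∈ E) : f x = f y := by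
  have hE' : E ∈ fibPart f := by rw [hf]; exact hE
  have := fibPart_block_eq hE' hx
  rw [this] at hy
  exact (Finset.mem_filter.mp hy).2.symm

omit hP1 hP2 in
lemma block_inj {f : V → ZMod k} (hf : fibPart f = P) {E E' : Finset V} (hE : E ∈ P)
    (hE' : E' ∈ P) {x y : V} (hx : x ∈ E) (hy : y ∈ E') (hxy : f x = f y) : E = E' := by
  have h1 : E ∈ fibPart f := by rw [hf]; exact hE
  have h2 : E' ∈ fibPart f := by rw [hf]; exact hE'
  rw [fibPart_block_eq h1 hx, fibPart_block_eq h2 hy, hxy]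

lemma fibPart_invFun (g : {E // E ∈ P} ↪ ZMod k) :
    fibPart (fun v => g ⟨blk hP2 v, blk_mem hP2 v⟩) = P := by
  set f : V → ZMod k := fun v => g ⟨blk hP2 v, blk_mem hP2 v⟩ with hfdef
  have hfiber : ∀ v : V, Finset.univ.filter (fun w => f w = f v) = blk hP2 v := by
    intro v
    ext w
    simp only [Finset.mem_filter, Finset.mem_univ, true_and, hfdef]
    constructor
    · intro h
      have : blk hP2 w = blk hP2 v := Subtype.ext_iff.mp (g.injective h)
      rw [← this]; exact mem_blk hP2 w
    · intro hw
      have : blk hP2 w = blk hP2 v := blk_eq_of_mem hP2 (blk_mem hP2 v) hw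
      simp [this]
  ext E
  constructor
  · intro hE
    obtain ⟨v, hv⟩ : E.Nonempty := by
      obtain ⟨c, hc, rfl⟩ := Finset.mem_image.mp hE
      obtain ⟨v, -, hv⟩ := Finset.mem_image.mp hc
      exact ⟨v, by simp [hv]⟩
    rw [fibPart_block_eq hE hv, hfiber v]
    exact blk_mem hP2 v
  · intro hE
    obtain ⟨v, hv⟩ := hP1 E hE
    have hEb : E = blk hP2 v := (blk_eq_of_mem hP2 hE hv).symm
    rw [hEb, ← hfiber v]
    exact mem_fibPart_self f v

/-- Colorings with fiber partition `P` correspond to injections from blocks to colors. -/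
noncomputable def fibEquiv (k : ℕ) :
    {f : V → ZMod k // fibPart f = P} ≃ ({E // E ∈ P} ↪ ZMod k) where
  toFun f := ⟨fun E => f.1 (rep hP1 E), by
    rintro E E' (h : f.1 _ = f.1 _)
    exact Subtype.ext (block_inj f.2 E.2 E'.2 (rep_mem hP1 E) (rep_mem hP1 E') h)⟩
  invFun g := ⟨fun v => g ⟨blk hP2 v, blk_mem hP2 v⟩, fibPart_invFun hP1 hP2 g⟩
  left_inv := by
    rintro ⟨f, hf⟩
    ext v
    simp only
    exact const_on_blocks hf (blk_mem hP2 v)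
      (rep_mem hP1 ⟨blk hP2 v, blk_mem hP2 v⟩) (mem_blk hP2 v)
  right_inv := by
    intro g
    ext E
    simp only [Function.Embedding.coeFn_mk]
    congr 1
    exact Function.Embedding.ext fun E => congrArg g (Subtype.ext (blk_eq_of_mem hP2 E.2 (rep_mem hP1 E)))

lemma card_fibPart_eq [NeZero k] :
    (Finset.univ.filter (fun f : V → ZMod k => fibPart f = P)).card
      = k.descFactorial P.card := by
  have h1 : (Finset.univ.filter (fun f : V → ZMod k => fibPart f = P)).card
      = Fintype.card {f : V → ZMod k // fibPart f = P} := by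
    rw [Fintype.card_subtype]
  rw [h1, Fintype.card_congr (fibEquiv hP1 hP2 k), Fintype.card_embedding_eq]
  simp [Fintype.card_coe]

end FibAux

section CountAux
variable {V : Type} [Fintype V] [DecidableEq V] (H : SimpleGraph V) [DecidableRel H.Adj]

/-- The number of proper colorings with `k` colors. -/
noncomputable def NPC (k : ℕ) [NeZero k] : ℕ :=
  (Finset.univ.filter (fun f : V → ZMod k => ∀ u v : V, H.Adj u v → f u ≠ f v)).card

lemma NPC_eq (k : ℕ) [NeZero k] :
    NPC H k = ∑ P : Finset (Finset V),
      if CompatiblePartition H P then k.descFactorial P.card else 0 := by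
  rw [NPC, Finset.card_eq_sum_card_fiberwise
    (f := fibPart) (t := (Finset.univ : Finset (Finset (Finset V))))
    (fun x _ => Finset.mem_univ _)]
  refine Finset.sum_congr rfl fun P _ => ?_
  rw [Finset.filter_filter]
  by_cases hP : CompatiblePartition H P
  · rw [if_pos hP, ← card_fibPart_eq hP.1 hP.2.1]
    congr 1
    ext f
    simp only [Finset.mem_filter, Finset.mem_univ, true_and, and_iff_right_iff_imp]
    intro hf
    exact (fibPart_compatible_iff H f).mp (hf ▸ hP)
  · rw [if_neg hP]
    convert Finset.card_empty
    ext f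
    simp only [Finset.mem_filter, Finset.mem_univ, true_and, Finset.notMem_empty,
      iff_false, not_and]
    intro hf hfib
    exact hP (hfib ▸ (fibPart_compatible_iff H f).mpr hf)

lemma sq_dvd_NPC (k : ℕ) [NeZero k] {A : Finset V} {a₀ b₀ : V}
    (ha : a₀ ∈ A) (hb : b₀ ∉ A)
    (hcross : ∀ u v : V, H.Adj u v → (u ∈ A ↔ v ∈ A)) :
    k * k ∣ NPC H k := by
  classical
  set Pr : (V → ZMod k) → Prop := fun f => ∀ u v : V, H.Adj u v → f u ≠ f v with hPr
  set sh : ZMod k → ZMod k → (V → ZMod k) → (V → ZMod k) :=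
    fun s t f v => f v + (if v ∈ A then s else t) with hsh
  have shPr : ∀ s t f, Pr f → Pr (sh s t f) := by
    intro s t f hf u v huv
    have := hcross u v huv
    simp only [hsh]
    by_cases hu : u ∈ A
    · rw [if_pos hu, if_pos (this.mp hu)]
      exact fun h => hf u v huv (by simpa using h)
    · rw [if_neg hu, if_neg (fun hv => hu (this.mpr hv))]
      exact fun h => hf u v huv (by simpa using h)
  have key : Fintype.card {f : V → ZMod k // Pr f}
      = Fintype.card ((ZMod k × ZMod k) × {f : V → ZMod k // Pr f ∧ f a₀ = 0 ∧ f b₀ = 0}) := by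
    refine Fintype.card_congr ?_
    refine
      { toFun := fun f => ⟨(f.1 a₀, f.1 b₀), ⟨sh (-f.1 a₀) (-f.1 b₀) f.1,
          shPr _ _ _ f.2, by simp [hsh, ha], by simp [hsh, hb]⟩⟩
        invFun := fun x => ⟨sh x.1.1 x.1.2 x.2.1, shPr _ _ _ x.2.2.1⟩
        left_inv := ?_
        right_inv := ?_ }
    · rintro ⟨f, hf⟩
      ext v
      by_cases hv : v ∈ A <;> simp [hsh, hv]
    · rintro ⟨⟨s, t⟩, ⟨g, hg, hga, hgb⟩⟩
      have h1 : (sh s t g) a₀ = s := by simp [hsh, ha, hga]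
      have h2 : (sh s t g) b₀ = t := by simp [hsh, hb, hgb]
      refine Prod.ext (Prod.ext ?_ ?_) (Subtype.ext ?_)
      · exact h1
      · exact h2
      · funext v
        show sh (-(sh s t g) a₀) (-(sh s t g) b₀) (sh s t g) v = g v
        rw [h1, h2]
        by_cases hv : v ∈ A <;> simp [hsh, hv]
  have hNPC : NPC H k = Fintype.card {f : V → ZMod k // Pr f} := by
    rw [NPC, Fintype.card_subtype]
  rw [hNPC, key, Fintype.card_prod, Fintype.card_prod, ZMod.card]
  exact ⟨Fintype.card {f : V → ZMod k // Pr f ∧ f a₀ = 0 ∧ f b₀ = 0}, by ring⟩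

open SimpleGraph in
lemma exists_split (hn : 2 ≤ Fintype.card V)
    (hedges : H.edgeFinset.card ≤ Fintype.card V - 2) :
    ∃ (A : Finset V) (a₀ b₀ : V), a₀ ∈ A ∧ b₀ ∉ A ∧
      ∀ u v : V, H.Adj u v → (u ∈ A ↔ v ∈ A) := by
  have hnc : ¬ H.Preconnected := by
    intro hconn
    have hpos : 0 < Fintype.card V := by omega
    obtain ⟨r⟩ : Nonempty V := Fintype.card_pos_iff.mp hpos
    have pick : ∀ v : V, ∃ u, (v ≠ r → H.Adj v u ∧ H.dist u r < H.dist v r) := by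
      intro v
      by_cases hv : v = r
      · exact ⟨r, fun h => absurd hv h⟩
      · have hr : H.Reachable v r := hconn v r
        have hd : H.dist v r ≠ 0 := by
          rw [dist_ne_zero_iff_ne_and_reachable]
          exact ⟨hv, hr⟩
        obtain ⟨p, hp⟩ := hr.exists_walk_length_eq_dist
        have hnil : ¬ p.Nil := by
          rw [Walk.nil_iff_length_eq, hp]
          exact hd
        obtain ⟨u, hadj, q, rfl⟩ := Walk.not_nil_iff.mp hnil
        refine ⟨u, fun _ => ⟨hadj, ?_⟩⟩
        have h1 : H.dist u r ≤ q.length := dist_le q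
        have h2 : q.length + 1 = H.dist v r := by
          simpa [Walk.length_cons] using hp
        omega
    choose u hu using pick
    have hinj : Set.InjOn (fun v => s(v, u v)) (Finset.univ.filter (· ≠ r) : Finset V) := by
      intro v hv v' hv' h
      simp only [Finset.coe_filter, Set.mem_setOf_eq] at hv hv'
      rcases Sym2.eq_iff.mp h with ⟨h1, h2⟩ | ⟨h1, h2⟩
      · exact h1
      · have d1 := (hu v hv.2).2
        have d2 := (hu v' hv'.2).2
        rw [← h1] at d2
        rw [h2] at d1
        omega
    have hmaps : ∀ v ∈ (Finset.univ.filter (· ≠ r) : Finset V), s(v, u v) ∈ H.edgeFinset := by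
      intro v hv
      rw [mem_edgeFinset, mem_edgeSet]
      exact (hu v (Finset.mem_filter.mp hv).2).1
    have hcard := Finset.card_le_card_of_injOn _ hmaps hinj
    have : (Finset.univ.filter (· ≠ r) : Finset V).card = Fintype.card V - 1 := by
      rw [Finset.filter_ne', Finset.card_erase_of_mem (Finset.mem_univ r), Finset.card_univ]
    omega
  rw [SimpleGraph.Preconnected] at hnc
  push_neg at hnc
  obtain ⟨a₀, b₀, hab⟩ := hnc
  refine ⟨Finset.univ.filter (fun w => H.Reachable a₀ w), a₀, b₀, ?_, ?_, ?_⟩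
  · simp only [Finset.mem_filter, Finset.mem_univ, true_and]
    exact Reachable.refl a₀
  · simp only [Finset.mem_filter, Finset.mem_univ, true_and]
    exact hab
  · intro x y hxy
    simp only [Finset.mem_filter, Finset.mem_univ, true_and]
    exact ⟨fun h => h.trans hxy.reachable, fun h => h.trans hxy.symm.reachable⟩

end CountAux

/- ### Arithmetic lemmas -/

lemma cast_descFact (k m : ℕ) :
    ((k.descFactorial m : ℤ)) = ∏ i ∈ Finset.range m, ((k : ℤ) - i) := by
  induction m with
  | zero => simp
  | succ m ih =>
    rw [Finset.prod_range_succ, ← ih]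
    rcases Nat.lt_or_ge m k with h | h
    · rw [Nat.descFactorial_succ]
      push_cast [Nat.cast_sub h.le]
      ring
    · rw [Nat.descFactorial_eq_zero_iff_lt.mpr (by omega : k < m + 1), Nat.cast_zero]
      rcases lt_or_eq_of_le h with h' | h'
      · rw [Nat.descFactorial_eq_zero_iff_lt.mpr h', Nat.cast_zero, zero_mul]
      · rw [h']
        simp

lemma descFact_modeq (k m : ℕ) (hm : 1 ≤ m) :
    ((k.descFactorial m : ℤ)) ≡ ((-1) ^ (m - 1) * (Nat.factorial (m - 1) : ℤ) * k)
      [ZMOD ((k : ℤ) * k)] := by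
  rw [cast_descFact]
  have hsplit : ∏ i ∈ Finset.range m, ((k : ℤ) - i)
      = (k : ℤ) * ∏ i ∈ Finset.Ico 1 m, ((k : ℤ) - i) := by
    rw [Finset.prod_range_eq_mul_Ico _ (by omega)]
    simp
  rw [hsplit]
  have hmod : (∏ i ∈ Finset.Ico 1 m, ((k : ℤ) - i))
      ≡ ((-1) ^ (m - 1) * (Nat.factorial (m - 1) : ℤ)) [ZMOD (k : ℤ)] := by
    have hfac : (Nat.factorial (m - 1) : ℤ) = ∏ i ∈ Finset.Ico 1 m, (i : ℤ) := by
      have h := Finset.prod_Ico_id_eq_factorial (m - 1)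
      rw [show m - 1 + 1 = m from by omega] at h
      rw [← h, Nat.cast_prod]
    have this2 : ((-1 : ℤ)) ^ (m - 1) * (Nat.factorial (m - 1) : ℤ)
        = ∏ i ∈ Finset.Ico 1 m, (-(i : ℤ)) := by
      rw [hfac, ← Nat.card_Ico 1 m, ← Finset.prod_const (-1 : ℤ), ← Finset.prod_mul_distrib]
      exact Finset.prod_congr rfl fun i _ => by ring
    rw [this2]
    have := (ZMod.intCast_eq_intCast_iff (∏ i ∈ Finset.Ico 1 m, ((k : ℤ) - i))
      (∏ i ∈ Finset.Ico 1 m, (-(i : ℤ))) k).mp ?_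
    · exact this
    · push_cast
      refine Finset.prod_congr rfl fun i _ => ?_
      rw [ZMod.natCast_self]
      ring
  have := Int.ModEq.mul_left' (c := (k : ℤ)) hmod
  calc (k : ℤ) * ∏ i ∈ Finset.Ico 1 m, ((k : ℤ) - i)
      ≡ (k : ℤ) * ((-1) ^ (m - 1) * (Nat.factorial (m - 1) : ℤ)) [ZMOD ((k : ℤ) * k)] := this
    _ = (-1) ^ (m - 1) * (Nat.factorial (m - 1) : ℤ) * k := by ring

lemma modeq_sum {α : Type*} (s : Finset α) (f g : α → ℤ) (n : ℤ)
    (h : ∀ a ∈ s, f a ≡ g a [ZMOD n]) : (∑ a ∈ s, f a) ≡ (∑ a ∈ s, g a) [ZMOD n] := by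
  classical
  induction s using Finset.induction with
  | empty => simp
  | insert _ _ hx ih =>
    rw [Finset.sum_insert hx, Finset.sum_insert hx]
    exact (h _ (Finset.mem_insert_self _ _)).add
      (ih fun a ha => h a (Finset.mem_insert_of_mem ha))

/- ### Main theorem -/

theorem sigma_eq_zero_of_few_edges {V : Type} [Fintype V] [DecidableEq V]
    (H : SimpleGraph V) [DecidableRel H.Adj]
    (hn : 2 ≤ Fintype.card V)
    (hedges : H.edgeFinset.card ≤ Fintype.card V - 2) :
    SigmaH H = 0 := by
  obtain ⟨A, a₀, b₀, ha, hb, hcross⟩ := exists_split H hn hedges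
  have hV : Nonempty V := Fintype.card_pos_iff.mp (by omega)
  have key : ∀ k : ℕ, k ≠ 0 → (k : ℤ) ∣ SigmaH H := by
    intro k hk
    haveI : NeZero k := ⟨hk⟩
    have h1 : ((NPC H k : ℤ)) = ∑ P : Finset (Finset V),
        if CompatiblePartition H P then (k.descFactorial P.card : ℤ) else 0 := by
      rw [NPC_eq H k, Nat.cast_sum]
      exact Finset.sum_congr rfl fun P _ => by split_ifs <;> simp
    have h2 : ((NPC H k : ℤ)) ≡ SigmaH H * k [ZMOD ((k : ℤ) * k)] := by
      rw [h1, SigmaH, Finset.sum_mul]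
      apply modeq_sum
      intro P _
      by_cases hP : CompatiblePartition H P
      · rw [if_pos hP, if_pos hP]
        have hcard : 1 ≤ P.card := by
          obtain ⟨v⟩ := hV
          obtain ⟨E, ⟨hE, -⟩, -⟩ := hP.2.1 v
          exact Finset.card_pos.mpr ⟨E, hE⟩
        exact descFact_modeq k P.card hcard
      · rw [if_neg hP, if_neg hP, zero_mul]
    have h3 : ((k : ℤ) * k) ∣ (NPC H k : ℤ) := by
      have := sq_dvd_NPC H k ha hb hcross
      exact_mod_cast Int.natCast_dvd_natCast.mpr this
    have h4 : ((k : ℤ) * k) ∣ SigmaH H * k := by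
      have hd := h2.dvd
      have := dvd_add hd h3
      simpa using this
    have hk' : (k : ℤ) ≠ 0 := by exact_mod_cast hk
    exact (mul_dvd_mul_iff_right hk').mp h4
  have hdvd := key ((SigmaH H).natAbs + 1) (by omega)
  refine Int.eq_zero_of_abs_lt_dvd hdvd ?_
  rw [Int.abs_eq_natAbs]
  exact_mod_cast Nat.lt_succ_self _
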